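/- Every centrally symmetric triangulation of a regular 2n-gon contains exactly one diameter. -/

import Mathlib

/-- `x` lies strictly between `a` and `b` in the cyclic order on `ZMod (2n)`. -/
def StrictBtw (n : ℕ) (a b x : ZMod (2 * n)) : Prop :=
  0 < (x - a).val ∧ (x - a).val < (b - a).val

/-- `p` is a diagonal of the `2n`-gon: its endpoints are neither equal nor adjacent. -/
def IsDiagonal (n : ℕ) (p : Sym2 (ZMod (2 * n))) : Prop :=
  ∀ a b : ZMod (2 * n), p = s(a, b) → a ≠ b ∧ a ≠ b + 1 ∧ b ≠ a + 1

/-- Two diagonals cross (in their interiors): they have pairwise distinct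
endpoints and exactly one endpoint of the second lies strictly between the
endpoints of the first in the cyclic order. -/
def Crosses (n : ℕ) (p q : Sym2 (ZMod (2 * n))) : Prop :=
  ∃ a b c d : ZMod (2 * n), p = s(a, b) ∧ q = s(c, d) ∧
    c ≠ a ∧ c ≠ b ∧ d ≠ a ∧ d ≠ b ∧
    Xor' (StrictBtw n a b c) (StrictBtw n a b d)

/-- A triangulation of the `2n`-gon: a maximal set of pairwise non-crossing diagonals. -/
def IsTriangulation (n : ℕ) (S : Set (Sym2 (ZMod (2 * n)))) : Prop :=
  (∀ p ∈ S, IsDiagonal n p) ∧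
  (∀ p ∈ S, ∀ q ∈ S, ¬ Crosses n p q) ∧
  (∀ p, IsDiagonal n p → (∀ q ∈ S, ¬ Crosses n p q ∧ ¬ Crosses n q p) → p ∈ S)

/-- A set of diagonals is centrally symmetric if it is invariant under the
rotation `x ↦ x + n`. -/
def IsCentrallySymmetric (n : ℕ) (S : Set (Sym2 (ZMod (2 * n)))) : Prop :=
  ∀ p ∈ S, Sym2.map (· + (n : ZMod (2 * n))) p ∈ S

/-- `p` is a diameter `[a, a+n]`. -/
def IsDiameter (n : ℕ) (p : Sym2 (ZMod (2 * n))) : Prop :=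
  ∃ a : ZMod (2 * n), p = s(a, a + (n : ZMod (2 * n)))

namespace StmtAux12

theorem dval' {N : ℕ} [NeZero N] (x y : ZMod N) :
    (x - y).val = if y.val ≤ x.val then x.val - y.val else N + x.val - y.val := by
  rw [sub_eq_add_neg, ZMod.val_add, ZMod.neg_val]
  have hx := ZMod.val_lt x
  have hy := ZMod.val_lt y
  split_ifs with h1 h2 h3
  · have hy0 : y.val = 0 := by simp [h1]
    rw [Nat.mod_eq_of_lt (by omega)]; omega
  · have hy0 : y.val = 0 := by simp [h1]
    omega
  · have h : x.val + (N - y.val) = N + (x.val - y.val) := by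
      have : y.val ≠ 0 := fun h => h1 (by rwa [← ZMod.val_eq_zero]); omega
    rw [h, Nat.add_mod_left, Nat.mod_eq_of_lt (by omega)]
  · rw [Nat.mod_eq_of_lt (by omega)]; omega

theorem castval' {N : ℕ} [NeZero N] (a : ZMod N) : ((a.val : ℕ) : ZMod N) = a := by
  simp [ZMod.natCast_val, ZMod.cast_id]

theorem pos_inj {N : ℕ} [NeZero N] {w u v : ZMod N}
    (h : (u - w).val = (v - w).val) : u = v := by
  have h2 : u - w = v - w := ZMod.val_injective _ h
  exact sub_left_inj.mp h2

theorem pos_ne' {N : ℕ} [NeZero N] {w u v : ZMod N} (h : u ≠ v) :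
    (u - w).val ≠ (v - w).val := fun hh => h (pos_inj hh)

theorem ne_of_vne {N : ℕ} [NeZero N] {w u v : ZMod N}
    (h : (u - w).val ≠ (v - w).val) : u ≠ v := fun hh => h (by rw [hh])

theorem negval' {N : ℕ} [NeZero N] {a : ZMod N} (h : a ≠ 0) :
    (-a).val = N - a.val := by rw [ZMod.neg_val]; simp [h]

section
variable {n : ℕ} (hn : 2 ≤ n)
include hn

theorem castn : ((n:ℕ) : ZMod (2*n)).val = n := by
  haveI : NeZero (2*n) := ⟨by omega⟩
  exact ZMod.val_cast_of_lt (by omega)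

theorem nne0 : ((n:ℕ) : ZMod (2*n)) ≠ 0 := by
  haveI : NeZero (2*n) := ⟨by omega⟩
  intro h
  have := castn hn
  rw [h, ZMod.val_zero] at this; omega

omit hn in
theorem nn0 : ((n:ℕ) : ZMod (2*n)) + ((n:ℕ) : ZMod (2*n)) = 0 := by
  rw [← Nat.cast_add]
  have : n + n = 2 * n := by ring
  rw [this, ZMod.natCast_self]

theorem pos_dn (d : ZMod (2*n)) : ((d + (n:ℕ)) - d).val = n := by
  haveI : NeZero (2*n) := ⟨by omega⟩
  rw [add_sub_cancel_left, castn hn]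

theorem val_ne_n {d x : ZMod (2*n)} (hx : x ≠ d + (n:ℕ)) : (x - d).val ≠ n := by
  haveI : NeZero (2*n) := ⟨by omega⟩
  intro h
  apply hx
  have : x - d = ((n:ℕ) : ZMod (2*n)) := by
    have := castval' (x - d); rw [h] at this; exact this.symm
  have := sub_eq_iff_eq_add.mp this
  rw [this]; ring

omit hn in
theorem val_ne_0 {N : ℕ} [NeZero N] {d x : ZMod N} (hx : x ≠ d) : (x - d).val ≠ 0 := by
  simpa [ZMod.val_eq_zero, sub_eq_zero] using hx

theorem btw_diam {d x : ZMod (2*n)} (hx0 : x ≠ d) (hxn : x ≠ d + (n:ℕ)) :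
    (StrictBtw n d (d+(n:ℕ)) x ↔ (x - d).val < n) ∧
    (StrictBtw n (d+(n:ℕ)) d x ↔ n < (x - d).val) := by
  haveI : NeZero (2*n) := ⟨by omega⟩
  have hi0 := val_ne_0 (N := 2*n) hx0
  have hin := val_ne_n hn hxn
  have hiN := ZMod.val_lt (x - d)
  have e1 : (x - (d+(n:ℕ))).val
      = if n ≤ (x-d).val then (x-d).val - n else 2*n + (x-d).val - n := by
    have : x - (d+(n:ℕ)) = (x - d) - ((n:ℕ) : ZMod (2*n)) := by ring
    rw [this, dval', castn hn]
  have e2 : (d - (d+(n:ℕ))).val = n := by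
    have : d - (d+(n:ℕ)) = -((n:ℕ) : ZMod (2*n)) := by ring
    rw [this, negval' (nne0 hn), castn hn]; omega
  constructor
  · simp only [StrictBtw, pos_dn hn]; omega
  · simp only [StrictBtw, e1, e2]; split_ifs <;> omega

theorem norm1 {d x y : ZMod (2*n)} (hx1 : x ≠ d) (hx2 : x ≠ d + (n:ℕ))
    (hy1 : y ≠ d) (hy2 : y ≠ d + (n:ℕ))
    (h : Xor' (StrictBtw n d (d+(n:ℕ)) x) (StrictBtw n d (d+(n:ℕ)) y) ∨
         Xor' (StrictBtw n (d+(n:ℕ)) d x) (StrictBtw n (d+(n:ℕ)) d y)) :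
    ((x-d).val < n ∧ n < (y-d).val) ∨ ((y-d).val < n ∧ n < (x-d).val) := by
  haveI : NeZero (2*n) := ⟨by omega⟩
  have bx := btw_diam hn hx1 hx2
  have by' := btw_diam hn hy1 hy2
  have hin := val_ne_n hn hx2
  have hjn := val_ne_n hn hy2
  rcases h with h | h
  · rw [Xor', xor_def, bx.1, by'.1] at h; omega
  · rw [Xor', xor_def, bx.2, by'.2] at h; omega

-- crossing symmetry
theorem xor_swap (a b c d : ZMod (2*n))
    (hca : c ≠ a) (hcb : c ≠ b) (hda : d ≠ a) (hdb : d ≠ b)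
    (hab : a ≠ b) (hcd : c ≠ d)
    (h : Xor' (StrictBtw n a b c) (StrictBtw n a b d)) :
    Xor' (StrictBtw n c d a) (StrictBtw n c d b) := by
  haveI : NeZero (2*n) := ⟨by omega⟩
  have e1 : (a - c).val = 2*n - (c-a).val := by
    rw [← neg_sub c a, negval' (sub_ne_zero.mpr hca)]
  have e2 : (d - c).val = if (c-a).val ≤ (d-a).val then (d-a).val - (c-a).val
      else 2*n + (d-a).val - (c-a).val := by
    rw [← sub_sub_sub_cancel_right d c a, dval']
  have e3 : (b - c).val = if (c-a).val ≤ (b-a).val then (b-a).val - (c-a).val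
      else 2*n + (b-a).val - (c-a).val := by
    rw [← sub_sub_sub_cancel_right b c a, dval']
  have hpb : (b-a).val ≠ 0 := by
    simp [ZMod.val_eq_zero, sub_eq_zero]; exact fun hh => hab hh.symm
  have hpc : (c-a).val ≠ 0 := by
    simp [ZMod.val_eq_zero, sub_eq_zero]; exact hca
  have hpd : (d-a).val ≠ 0 := by
    simp [ZMod.val_eq_zero, sub_eq_zero]; exact hda
  have h1 := pos_ne' (w := a) hcb
  have h2 := pos_ne' (w := a) hdb
  have h3 := pos_ne' (w := a) hcd
  have l1 := ZMod.val_lt (b-a)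
  have l2 := ZMod.val_lt (c-a)
  have l3 := ZMod.val_lt (d-a)
  simp only [StrictBtw, e1, e2, e3, Xor', xor_def] at h ⊢
  split_ifs <;> omega

theorem core {S : Set (Sym2 (ZMod (2*n)))}
    (hS : IsTriangulation n S) (hCS : IsCentrallySymmetric n S)
    (hnodiam : ∀ a : ZMod (2*n), s(a, a + (n : ZMod (2*n))) ∉ S)
    {k : ℕ} {a : ZMod (2*n)} (hkn : k < n)
    (he : s(a, a + (k : ZMod (2*n))) ∈ S)
    (hmax : ∀ m, m < n → (∃ b : ZMod (2*n), s(b, b + (m : ZMod (2*n))) ∈ S) → m ≤ k)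
    {x y : ZMod (2*n)} (hf : s(x,y) ∈ S)
    (hi0 : 0 < (x - (a + (k : ZMod (2*n)))).val)
    (hi : (x - (a + (k : ZMod (2*n)))).val < n)
    (hj : n < (y - (a + (k : ZMod (2*n)))).val) : False := by
  haveI : NeZero (2*n) := ⟨by omega⟩
  set d : ZMod (2*n) := a + (k : ZMod (2*n)) with hd
  set i := (x - d).val with hhi
  set j := (y - d).val with hhj
  have hiN : i < 2*n := ZMod.val_lt _
  have hjN : j < 2*n := ZMod.val_lt _
  have castk : ((k:ℕ) : ZMod (2*n)).val = k := ZMod.val_cast_of_lt (by omega)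
  have hk0 : k ≠ 0 := by
    intro h0
    have hdiag := hS.1 _ he a (a + (k : ZMod (2*n))) rfl
    apply hdiag.1
    simp [h0]
  have hdc : (d - a).val = k := by rw [hd, add_sub_cancel_left, castk]
  have hcd : (a - d).val = 2*n - k := by
    have h1 : a - d = -((k:ℕ) : ZMod (2*n)) := by rw [hd]; ring
    have h2 : ((k:ℕ) : ZMod (2*n)) ≠ 0 := by
      intro hh; apply hk0; rw [← castk, hh, ZMod.val_zero]
    rw [h1, negval' h2, castk]
  -- step 1 : j ≤ 2n - k
  have step1 : j ≤ 2*n - k := by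
    by_contra hj2
    push_neg at hj2
    apply hS.2.1 _ he _ hf
    have eyc : (y - a).val = j - (2*n - k) := by
      have h1 : y - a = (y - d) - (a - d) := by ring
      rw [h1, dval', ← hhj, hcd, if_pos (by omega)]
    have exc : (x - a).val = i + k := by
      have h1 : x - a = (x - d) - (a - d) := by ring
      rw [h1, dval', ← hhi, hcd, if_neg (by omega)]
      omega
    refine ⟨a, d, x, y, rfl, rfl, ?_, ?_, ?_, ?_, Or.inr ⟨?_, ?_⟩⟩
    · exact ne_of_vne (w := d) (by rw [hcd, ← hhi]; omega)
    · exact ne_of_vne (w := d) (by simp [← hhi]; omega)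
    · exact ne_of_vne (w := d) (by rw [hcd, ← hhj]; omega)
    · exact ne_of_vne (w := d) (by simp [← hhj]; omega)
    · rw [StrictBtw, eyc, hdc]; omega
    · rw [StrictBtw, exc, hdc]; omega
  -- step 2 : i ≤ n - k
  have step2 : i ≤ n - k := by
    by_contra hi2
    push_neg at hi2
    have he' := hCS _ he
    rw [Sym2.map_pair_eq] at he'
    apply hS.2.1 _ he' _ hf
    have hcn : (a + (n : ZMod (2*n)) - d).val = n - k := by
      have h1 : a + (n : ZMod (2*n)) - d = (((n - k : ℕ)) : ZMod (2*n)) := by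
        rw [hd, Nat.cast_sub (by omega)]; ring
      rw [h1, ZMod.val_cast_of_lt (by omega)]
    have hrel : (a + (k : ZMod (2*n)) + (n : ZMod (2*n))) - (a + (n : ZMod (2*n))) = d - a := by
      rw [hd]; ring
    have hdn' : ((a + (k : ZMod (2*n)) + (n : ZMod (2*n))) - d).val = n := by
      have h1 : a + (k : ZMod (2*n)) + (n : ZMod (2*n)) - d = ((n:ℕ) : ZMod (2*n)) := by
        rw [hd]; ring
      rw [h1, castn hn]
    have exc : (x - (a + (n : ZMod (2*n)))).val = i - (n - k) := by
      have h1 : x - (a + (n : ZMod (2*n))) = (x - d) - (a + (n : ZMod (2*n)) - d) := by ring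
      rw [h1, dval', hcn, ← hhi, if_pos (by omega)]
    have eyc : (y - (a + (n : ZMod (2*n)))).val = j - (n - k) := by
      have h1 : y - (a + (n : ZMod (2*n))) = (y - d) - (a + (n : ZMod (2*n)) - d) := by ring
      rw [h1, dval', hcn, ← hhj, if_pos (by omega)]
    have edc : ((a + (k : ZMod (2*n)) + (n : ZMod (2*n))) - (a + (n : ZMod (2*n)))).val = k := by
      rw [hrel, hdc]
    refine ⟨a + (n : ZMod (2*n)), a + (k : ZMod (2*n)) + (n : ZMod (2*n)), x, y, rfl, rfl,
      ?_, ?_, ?_, ?_, Or.inl ⟨?_, ?_⟩⟩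
    · exact ne_of_vne (w := d) (by rw [hcn, ← hhi]; omega)
    · exact ne_of_vne (w := d) (by rw [hdn', ← hhi]; omega)
    · exact ne_of_vne (w := d) (by rw [hcn, ← hhj]; omega)
    · exact ne_of_vne (w := d) (by rw [hdn', ← hhj]; omega)
    · rw [StrictBtw, exc, edc]; omega
    · rw [StrictBtw, eyc, edc]; omega
  have hij : i < j := by omega
  have eyx : (y - x).val = j - i := by
    have h1 : y - x = (y - d) - (x - d) := by ring
    rw [h1, dval', ← hhi, ← hhj, if_pos (by omega)]
  have hnd : j - i ≠ n := by
    intro hdm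
    apply hnodiam x
    have h1 : y - x = ((n:ℕ) : ZMod (2*n)) := by
      have := castval' (y - x)
      rw [eyx, hdm] at this
      exact this.symm
    have h2 : y = x + ((n:ℕ) : ZMod (2*n)) := by
      rw [← h1]; ring
    rwa [← h2]
  rcases lt_trichotomy (j - i) n with hc | hc | hc
  · have hm : j - i ≤ k := by
      apply hmax _ hc
      refine ⟨x, ?_⟩
      have h1 : x + (((j - i : ℕ)) : ZMod (2*n)) = y := by
        rw [← eyx, castval']; ring
      rwa [h1]
    omega
  · exact hnd hc
  · have exy : (x - y).val = 2*n + i - j := by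
      have h1 : x - y = (x - d) - (y - d) := by ring
      rw [h1, dval', ← hhi, ← hhj, if_neg (by omega)]
    have hm : 2*n + i - j ≤ k := by
      apply hmax _ (by omega)
      refine ⟨y, ?_⟩
      have h1 : y + (((2*n + i - j : ℕ)) : ZMod (2*n)) = x := by
        rw [← exy, castval']; ring
      rw [h1, Sym2.eq_swap]
      exact hf
    omega

theorem diam_is_diagonal (d : ZMod (2*n)) : IsDiagonal n s(d, d + (n:ℕ)) := by
  haveI : NeZero (2*n) := ⟨by omega⟩
  have key : ∀ (m : ℕ), 0 < m → m < 2*n → ∀ u : ZMod (2*n), u ≠ u + (m:ℕ) := by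
    intro m hm1 hm2 u h
    have h0 : ((m:ℕ) : ZMod (2*n)) = 0 := (left_eq_add.mp h)
    have hv : ((m:ℕ) : ZMod (2*n)).val = m := ZMod.val_cast_of_lt hm2
    rw [h0, ZMod.val_zero] at hv; omega
  have f1 : ∀ u : ZMod (2*n), u ≠ u + (n:ℕ) := key n (by omega) (by omega)
  have f2 : ∀ u : ZMod (2*n), u ≠ u + (n:ℕ) + 1 := by
    intro u
    have h : u + (n:ℕ) + 1 = u + (((n+1 : ℕ)) : ZMod (2*n)) := by push_cast; ring
    rw [h]; exact key (n+1) (by omega) (by omega) u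
  have f3 : ∀ u : ZMod (2*n), u + (n:ℕ) ≠ u + 1 := by
    intro u h
    have h2 : ((n:ℕ) : ZMod (2*n)) = 1 := add_left_cancel h
    have hc := castn hn
    rw [h2, ZMod.val_one_eq_one_mod, Nat.mod_eq_of_lt (by omega)] at hc; omega
  intro u v huv
  rcases Sym2.eq_iff.mp huv with ⟨h1, h2⟩ | ⟨h1, h2⟩
  · subst h1; subst h2; exact ⟨f1 d, f2 d, f3 d⟩
  · subst h1; subst h2; exact ⟨(f1 d).symm, f3 d, f2 d⟩

theorem nocross {S : Set (Sym2 (ZMod (2*n)))} (hS : IsTriangulation n S) (d : ZMod (2*n))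
    (hcore : ∀ x y : ZMod (2*n), s(x,y) ∈ S → 0 < (x-d).val → (x-d).val < n →
      n < (y-d).val → False) :
    ∀ q ∈ S, ¬ Crosses n s(d, d + (n:ℕ)) q ∧ ¬ Crosses n q s(d, d + (n:ℕ)) := by
  haveI : NeZero (2*n) := ⟨by omega⟩
  intro q hq0
  have hfin : ∀ x y : ZMod (2*n), s(x,y) ∈ S → x ≠ d → x ≠ d + (n:ℕ) → y ≠ d →
      y ≠ d + (n:ℕ) →
      (Xor' (StrictBtw n d (d+(n:ℕ)) x) (StrictBtw n d (d+(n:ℕ)) y) ∨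
       Xor' (StrictBtw n (d+(n:ℕ)) d x) (StrictBtw n (d+(n:ℕ)) d y)) → False := by
    intro x y hxy h1 h2 h3 h4 hx
    rcases norm1 hn h1 h2 h3 h4 hx with ⟨ha, hb⟩ | ⟨ha, hb⟩
    · exact hcore x y hxy (Nat.pos_of_ne_zero (val_ne_0 h1)) ha hb
    · exact hcore y x (Sym2.eq_swap ▸ hxy) (Nat.pos_of_ne_zero (val_ne_0 h3)) ha hb
  have hdd : d ≠ d + (n:ℕ) := by
    intro h; exact nne0 hn (left_eq_add.mp h)
  constructor
  · rintro ⟨a', b', x, y, hδ, hq', hx1, hx2, hy1, hy2, hxor⟩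
    subst hq'
    rcases Sym2.eq_iff.mp hδ with ⟨ha, hb⟩ | ⟨ha, hb⟩
    · subst ha; subst hb
      exact hfin x y hq0 hx1 hx2 hy1 hy2 (Or.inl hxor)
    · subst ha; subst hb
      exact hfin x y hq0 hx2 hx1 hy2 hy1 (Or.inr hxor)
  · rintro ⟨x, y, c', d', hq', hδ, h1, h2, h3, h4, hxor⟩
    subst hq'
    have hxy : x ≠ y := (hS.1 _ hq0 x y rfl).1
    rcases Sym2.eq_iff.mp hδ with ⟨ha, hb⟩ | ⟨ha, hb⟩
    · subst ha; subst hb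
      have hsw := xor_swap hn x y d (d+(n:ℕ)) h1 h2 h3 h4 hxy hdd hxor
      exact hfin x y hq0 (Ne.symm h1) (Ne.symm h3) (Ne.symm h2) (Ne.symm h4) (Or.inl hsw)
    · subst ha; subst hb
      have hsw := xor_swap hn x y (d+(n:ℕ)) d h1 h2 h3 h4 hxy (Ne.symm hdd) hxor
      exact hfin x y hq0 (Ne.symm h3) (Ne.symm h1) (Ne.symm h4) (Ne.symm h2) (Or.inr hsw)

theorem diam_cross (a b : ZMod (2*n)) (hba : b ≠ a) (hban : b ≠ a + (n:ℕ)) :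
    Crosses n s(a, a + (n:ℕ)) s(b, b + (n:ℕ)) := by
  haveI : NeZero (2*n) := ⟨by omega⟩
  have hnegn : -((n:ℕ) : ZMod (2*n)) = ((n:ℕ) : ZMod (2*n)) :=
    neg_eq_of_add_eq_zero_left (nn0 (n := n))
  have hbna : b + (n:ℕ) ≠ a := by
    intro h
    apply hban
    have : b = a - (n:ℕ) := by rw [← h]; ring
    rw [this, sub_eq_add_neg, hnegn]
  have hbnan : b + (n:ℕ) ≠ a + (n:ℕ) := fun h => hba (add_right_cancel h)
  refine ⟨a, a + (n:ℕ), b, b + (n:ℕ), rfl, rfl, hba, hban, hbna, hbnan, ?_⟩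
  have hb1 := (btw_diam hn hba hban).1
  have hb2 := (btw_diam hn hbna hbnan).1
  have hibn : (b - a).val ≠ n := val_ne_n hn hban
  have hib0 : (b - a).val ≠ 0 := val_ne_0 hba
  have hibN : (b - a).val < 2*n := ZMod.val_lt _
  have hval : (b + (n:ℕ) - a).val =
      if (b - a).val < n then (b - a).val + n else (b - a).val - n := by
    have h1 : b + (n:ℕ) - a = (b - a) + ((n:ℕ) : ZMod (2*n)) := by ring
    rw [h1, ZMod.val_add, castn hn]
    split_ifs with h
    · rw [Nat.mod_eq_of_lt (by omega)]
    · have h2 : (b - a).val + n = ((b - a).val - n) + 1 * (2*n) := by omega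
      rw [h2, Nat.add_mul_mod_self_right, Nat.mod_eq_of_lt (by omega)]
  rw [Xor', xor_def, hb1, hb2, hval]
  split_ifs <;> omega

theorem diam_eq {S : Set (Sym2 (ZMod (2*n)))} (hS : IsTriangulation n S) {a b : ZMod (2*n)}
    (ha : s(a, a + (n:ℕ)) ∈ S) (hb : s(b, b + (n:ℕ)) ∈ S) :
    s(b, b + (n:ℕ)) = s(a, a + (n:ℕ)) := by
  haveI : NeZero (2*n) := ⟨by omega⟩
  by_cases h1 : b = a
  · rw [h1]
  by_cases h2 : b = a + (n:ℕ)
  · subst h2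
    rw [add_assoc, nn0 (n := n), add_zero, Sym2.eq_swap]
  · exact absurd (diam_cross hn a b h1 h2) (hS.2.1 _ ha _ hb)

end

end StmtAux12

/-- Every centrally symmetric triangulation of a regular `2n`-gon contains exactly
one diameter. -/
theorem stmt_12 (n : ℕ) (hn : 2 ≤ n) (S : Set (Sym2 (ZMod (2 * n))))
    (hS : IsTriangulation n S) (hCS : IsCentrallySymmetric n S) :
    ∃! p, p ∈ S ∧ IsDiameter n p := by
  classical
  haveI : NeZero (2*n) := ⟨by omega⟩
  have hex : ∃ a : ZMod (2*n), s(a, a + (n : ZMod (2*n))) ∈ S := by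
    by_contra hne
    push_neg at hne
    have hchord : ∀ x y : ZMod (2*n), s(x,y) ∈ S →
        ∃ m, m < n ∧ ∃ b : ZMod (2*n), s(b, b + (m : ZMod (2*n))) ∈ S := by
      intro x y hq
      have hxy : x ≠ y := (hS.1 _ hq x y rfl).1
      have hyn : y ≠ x + (n : ZMod (2*n)) := fun h => hne x (h ▸ hq)
      have hne0 : (y - x).val ≠ 0 := StmtAux12.val_ne_0 (Ne.symm hxy)
      have hnen : (y - x).val ≠ n := StmtAux12.val_ne_n hn hyn
      have hlt : (y - x).val < 2*n := ZMod.val_lt _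
      rcases lt_or_gt_of_ne hnen with h | h
      · refine ⟨(y - x).val, h, x, ?_⟩
        have hrep : x + (((y - x).val : ℕ) : ZMod (2*n)) = y := by
          rw [StmtAux12.castval']; ring
        rwa [hrep]
      · have hxyval : (x - y).val = 2*n - (y - x).val := by
          rw [← neg_sub y x, StmtAux12.negval' (sub_ne_zero.mpr (Ne.symm hxy))]
        refine ⟨2*n - (y - x).val, by omega, y, ?_⟩
        have hrep : y + (((2*n - (y - x).val : ℕ)) : ZMod (2*n)) = x := by
          rw [← hxyval, StmtAux12.castval']; ring
        rw [hrep, Sym2.eq_swap]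
        exact hq
    set T : Finset ℕ :=
      (Finset.range n).filter
        (fun m => ∃ b : ZMod (2*n), s(b, b + (m : ZMod (2*n))) ∈ S) with hT
    by_cases hTne : T.Nonempty
    · set k := T.max' hTne with hk
      have hkmem : k ∈ T := T.max'_mem hTne
      rw [hT, Finset.mem_filter, Finset.mem_range] at hkmem
      obtain ⟨hkn, a, he⟩ := hkmem
      refine hne (a + ((k : ℕ) : ZMod (2*n))) ?_
      apply hS.2.2 _ (StmtAux12.diam_is_diagonal hn _)
      apply StmtAux12.nocross hn hS
      intro x y hxy h0 h1 h2
      refine StmtAux12.core hn hS hCS hne hkn he ?_ hxy h0 h1 h2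
      intro m hm hex2
      exact T.le_max' m (by rw [hT, Finset.mem_filter, Finset.mem_range]; exact ⟨hm, hex2⟩)
    · refine hne 0 ?_
      apply hS.2.2 _ (StmtAux12.diam_is_diagonal hn 0)
      intro q hq
      exfalso
      apply hTne
      revert hq
      induction q using Sym2.ind with
      | _ x y =>
        intro hq
        obtain ⟨m, hm, hb⟩ := hchord x y hq
        exact ⟨m, by rw [hT, Finset.mem_filter, Finset.mem_range]; exact ⟨hm, hb⟩⟩
  obtain ⟨a, ha⟩ := hex
  refine ⟨s(a, a + (n : ZMod (2*n))), ⟨ha, ⟨a, rfl⟩⟩, ?_⟩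
  rintro q ⟨hq, b, rfl⟩
  exact StmtAux12.diam_eq hn hS ha hq
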